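/- Let M be a connected topological space and let ≪ be a binary relation on M with open pasts and open futures. Let φ : M → M be a homeomorphism with x ≪ φ(x) for all x ∈ M. If U ⊆ M is a nonempty past set with φ(U) = U, then U = M. -/
import Mathlib


open Set Filter Topology MeasureTheory

/-- The chronological past of a set `A` with respect to relation `r`. -/
def chronPast {M : Type*} (r : M → M → Prop) (A : Set M) : Set M :=
  {x | ∃ y ∈ A, r x y}

/-- The chronological future of a set `A` with respect to relation `r`. -/
def chronFut {M : Type*} (r : M → M → Prop) (A : Set M) : Set M :=
  {x | ∃ y ∈ A, r y x}

/-- A past set: `I⁻(U) = U`. -/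
def IsPastSet {M : Type*} (r : M → M → Prop) (U : Set M) : Prop :=
  chronPast r U = U

/-- A future set: `I⁺(U) = U`. -/
def IsFutureSet {M : Type*} (r : M → M → Prop) (U : Set M) : Prop :=
  chronFut r U = U

/-- An indecomposable past set (IP): a nonempty past set that is not the union of
two past sets, each a proper subset of it. -/
def IsIP {M : Type*} (r : M → M → Prop) (U : Set M) : Prop :=
  U.Nonempty ∧ IsPastSet r U ∧
    ¬ ∃ A B : Set M, IsPastSet r A ∧ IsPastSet r B ∧ A ⊂ U ∧ B ⊂ U ∧ A ∪ B = U

/-- An indecomposable future set (IF). -/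
def IsIF {M : Type*} (r : M → M → Prop) (U : Set M) : Prop :=
  U.Nonempty ∧ IsFutureSet r U ∧
    ¬ ∃ A B : Set M, IsFutureSet r A ∧ IsFutureSet r B ∧ A ⊂ U ∧ B ⊂ U ∧ A ∪ B = U

/-- A terminal indecomposable past set (TIP): an IP not of the form `I⁻(p)`. -/
def IsTIP {M : Type*} (r : M → M → Prop) (U : Set M) : Prop :=
  IsIP r U ∧ ∀ p : M, U ≠ chronPast r {p}

/-- A terminal indecomposable future set (TIF): an IF not of the form `I⁺(p)`. -/
def IsTIF {M : Type*} (r : M → M → Prop) (U : Set M) : Prop :=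
  IsIF r U ∧ ∀ p : M, U ≠ chronFut r {p}

/-- A minimal TIP: a TIP containing no TIP as a proper subset. -/
def IsMinTIP {M : Type*} (r : M → M → Prop) (U : Set M) : Prop :=
  IsTIP r U ∧ ∀ V : Set M, IsTIP r V → V ⊆ U → V = U

/-- On a connected space with open pasts and open futures, a nonempty past
set invariant under a timelike homeomorphism is the whole space. -/
theorem stmt_2 {M : Type*} [TopologicalSpace M] [ConnectedSpace M]
    (r : M → M → Prop)
    (hOpenPast : ∀ p : M, IsOpen (chronPast r {p}))
    (hOpenFut : ∀ p : M, IsOpen (chronFut r {p}))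
    (φ : M ≃ₜ M)
    (htimelike : ∀ x : M, r x (φ x))
    (U : Set M) (hne : U.Nonempty) (hpast : IsPastSet r U)
    (hinv : φ '' U = U) :
    U = Set.univ := by
  have hopen : IsOpen U := by
    have : U = ⋃ y ∈ U, chronPast r {y} := by
      ext x
      simp only [Set.mem_iUnion, chronPast, Set.mem_setOf_eq, Set.mem_singleton_iff]
      constructor
      · intro hx
        rw [← hpast] at hx
        obtain ⟨y, hy, hr⟩ := hx
        exact ⟨y, hy, y, rfl, hr⟩
      · rintro ⟨y, hy, z, hz, hr⟩
        rw [← hpast]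
        exact ⟨y, hy, hz ▸ hr⟩
    rw [this]
    exact isOpen_biUnion fun y _ => hOpenPast y
  have hclosed : IsClosed U := by
    rw [← closure_eq_iff_isClosed]
    apply Set.Subset.antisymm _ subset_closure
    intro x hx
    have hφx : φ x ∈ closure U := by
      have : φ '' closure U = closure U := by
        rw [φ.image_closure, hinv]
      rw [← this]
      exact ⟨x, hx, rfl⟩
    have hnb : chronFut r {x} ∈ nhds (φ x) :=
      (hOpenFut x).mem_nhds ⟨x, rfl, htimelike x⟩
    obtain ⟨y, hyF, hyU⟩ := mem_closure_iff_nhds.mp hφx _ hnb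
    obtain ⟨z, hz, hr⟩ := hyF
    rw [Set.mem_singleton_iff] at hz
    subst hz
    rw [← hpast]
    exact ⟨y, hyU, hr⟩
  exact IsClopen.eq_univ ⟨hclosed, hopen⟩ hne
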